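/- Let h : [0,1] → ℝ be a function of bounded variation with h(x) ≥ c > 0 for m-a.e. x and ∫_0^1 h dm = 1, where m is Lebesgue measure, and let ν := h·m. Fix x0 ∈ [0,1] and α > 0, and define φ(x) := |x − x0|^{−1/α}. Then the limit b := lim_{ε→0⁺} ε^{−1} ν({ x ∈ [0,1] : |x − x0| < ε }) exists and satisfies 0 < b < ∞, and moreover lim_{t→∞} t^α ν({ x : φ(x) > t }) = b. Consequently n ν({ φ > b_n }) → 1 for b_n := (bn)^{1/α}, so φ is regularly varying of index α with respect to ν with constant slowly varying function. -/

import Mathlib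

open MeasureTheory Filter Set Topology

noncomputable section

/-- Lebesgue measure on `[0,1]`. -/
def mLeb : Measure ℝ := volume.restrict (Set.Icc 0 1)

/-- The observable `φ(x) = |x − x0|^{−1/α}`. -/
def phiObs (α x0 x : ℝ) : ℝ := |x - x0| ^ (-α⁻¹)

lemma map_add_right_nhdsGT (x0 : ℝ) :
    Tendsto (fun ε : ℝ => x0 + ε) (𝓝[>] 0) (𝓝[>] x0) := by
  refine tendsto_nhdsWithin_of_tendsto_nhds_of_eventually_within _ ?_ ?_
  · exact (continuous_const.add continuous_id).tendsto' (0 : ℝ) x0 (by simp) |>.mono_left nhdsWithin_le_nhds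
  · filter_upwards [self_mem_nhdsWithin] with ε (hε : 0 < ε)
    simpa using hε

lemma map_sub_left_nhdsLT (x0 : ℝ) :
    Tendsto (fun ε : ℝ => x0 - ε) (𝓝[>] 0) (𝓝[<] x0) := by
  refine tendsto_nhdsWithin_of_tendsto_nhds_of_eventually_within _ ?_ ?_
  · exact (continuous_const.sub continuous_id).tendsto' (0 : ℝ) x0 (by simp) |>.mono_left nhdsWithin_le_nhds
  · filter_upwards [self_mem_nhdsWithin] with ε (hε : 0 < ε)
    simpa using hε

lemma mono_avg_right (p : ℝ → ℝ) (x0 d : ℝ) (hd : x0 < d) (hp : MonotoneOn p (Icc x0 d)) :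
    Tendsto (fun ε => (∫ x in Ioc x0 (x0 + ε), p x) / ε) (𝓝[>] 0)
      (𝓝 (sInf (p '' Ioo x0 d))) := by
  set P := sInf (p '' Ioo x0 d) with hP
  have hbdd : BddBelow (p '' Ioo x0 d) := by
    refine ⟨p x0, ?_⟩
    rintro _ ⟨x, hx, rfl⟩
    exact hp ⟨le_refl _, hd.le⟩ ⟨hx.1.le, hx.2.le⟩ hx.1.le
  have hPle : ∀ x ∈ Ioo x0 d, P ≤ p x := fun x hx => csInf_le hbdd (mem_image_of_mem _ hx)
  have htendp : Tendsto p (𝓝[>] x0) (𝓝 P) :=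
    MonotoneOn.tendsto_nhdsWithin_Ioo_right (nonempty_Ioo.2 hd)
      (hp.mono Ioo_subset_Icc_self) hbdd
  have hcomp : Tendsto (fun ε => p (x0 + ε)) (𝓝[>] 0) (𝓝 P) :=
    htendp.comp (map_add_right_nhdsGT x0)
  have hev : Ioo (0 : ℝ) (d - x0) ∈ 𝓝[>] (0 : ℝ) :=
    Ioo_mem_nhdsGT_of_mem ⟨le_refl _, by linarith⟩
  refine tendsto_of_tendsto_of_tendsto_of_le_of_le' tendsto_const_nhds hcomp ?_ ?_
  · filter_upwards [hev] with ε hε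
    have hε0 : 0 < ε := hε.1
    have hsub : Icc x0 (x0 + ε) ⊆ Icc x0 d := Icc_subset_Icc (le_refl _) (by linarith [hε.2])
    have hint : IntegrableOn p (Ioc x0 (x0 + ε)) volume :=
      ((hp.mono hsub).integrableOn_isCompact isCompact_Icc).mono_set Ioc_subset_Icc_self
    have hmono : ∫ x in Ioc x0 (x0 + ε), (P : ℝ) ≤ ∫ x in Ioc x0 (x0 + ε), p x := by
      refine setIntegral_mono_on (integrableOn_const measure_Ioc_lt_top.ne) hint
        measurableSet_Ioc ?_
      intro x hx
      exact hPle x ⟨hx.1, by linarith [hx.2, hε.2]⟩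
    rw [setIntegral_const, Real.volume_real_Ioc_of_le (by linarith)] at hmono
    rw [le_div_iff₀ hε0]
    simpa [mul_comm] using hmono
  · filter_upwards [hev] with ε hε
    have hε0 : 0 < ε := hε.1
    have hsub : Icc x0 (x0 + ε) ⊆ Icc x0 d := Icc_subset_Icc (le_refl _) (by linarith [hε.2])
    have hint : IntegrableOn p (Ioc x0 (x0 + ε)) volume :=
      ((hp.mono hsub).integrableOn_isCompact isCompact_Icc).mono_set Ioc_subset_Icc_self
    have hmono : ∫ x in Ioc x0 (x0 + ε), p x ≤ ∫ x in Ioc x0 (x0 + ε), (p (x0 + ε) : ℝ) := by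
      refine setIntegral_mono_on hint (integrableOn_const measure_Ioc_lt_top.ne)
        measurableSet_Ioc ?_
      intro x hx
      exact hp (hsub ⟨hx.1.le, hx.2⟩) (hsub ⟨by linarith [hε0], le_refl _⟩) hx.2
    rw [setIntegral_const, Real.volume_real_Ioc_of_le (by linarith)] at hmono
    rw [div_le_iff₀ hε0]
    simpa [mul_comm] using hmono

lemma mono_avg_left (p : ℝ → ℝ) (x0 d : ℝ) (hd : d < x0) (hp : MonotoneOn p (Icc d x0)) :
    Tendsto (fun ε => (∫ x in Ico (x0 - ε) x0, p x) / ε) (𝓝[>] 0)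
      (𝓝 (sSup (p '' Ioo d x0))) := by
  set P := sSup (p '' Ioo d x0) with hP
  have hbdd : BddAbove (p '' Ioo d x0) := by
    refine ⟨p x0, ?_⟩
    rintro _ ⟨x, hx, rfl⟩
    exact hp ⟨hx.1.le, hx.2.le⟩ ⟨hd.le, le_refl _⟩ hx.2.le
  have hPge : ∀ x ∈ Ioo d x0, p x ≤ P := fun x hx => le_csSup hbdd (mem_image_of_mem _ hx)
  have htendp : Tendsto p (𝓝[<] x0) (𝓝 P) :=
    MonotoneOn.tendsto_nhdsWithin_Ioo_left (nonempty_Ioo.2 hd)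
      (hp.mono Ioo_subset_Icc_self) hbdd
  have hcomp : Tendsto (fun ε => p (x0 - ε)) (𝓝[>] 0) (𝓝 P) :=
    htendp.comp (map_sub_left_nhdsLT x0)
  have hev : Ioo (0 : ℝ) (x0 - d) ∈ 𝓝[>] (0 : ℝ) :=
    Ioo_mem_nhdsGT_of_mem ⟨le_refl _, by linarith⟩
  refine tendsto_of_tendsto_of_tendsto_of_le_of_le' hcomp tendsto_const_nhds ?_ ?_
  · filter_upwards [hev] with ε hε
    have hε0 : 0 < ε := hε.1
    have hsub : Icc (x0 - ε) x0 ⊆ Icc d x0 := Icc_subset_Icc (by linarith [hε.2]) (le_refl _)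
    have hint : IntegrableOn p (Ico (x0 - ε) x0) volume :=
      ((hp.mono hsub).integrableOn_isCompact isCompact_Icc).mono_set Ico_subset_Icc_self
    have hmono : ∫ x in Ico (x0 - ε) x0, (p (x0 - ε) : ℝ) ≤ ∫ x in Ico (x0 - ε) x0, p x := by
      refine setIntegral_mono_on (integrableOn_const measure_Ico_lt_top.ne) hint
        measurableSet_Ico ?_
      intro x hx
      exact hp (hsub ⟨le_refl _, by linarith [hε0]⟩) (hsub ⟨hx.1, hx.2.le⟩) hx.1
    rw [setIntegral_const, Real.volume_real_Ico_of_le (by linarith)] at hmono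
    rw [le_div_iff₀ hε0]
    simpa [mul_comm, sub_sub_cancel] using hmono
  · filter_upwards [hev] with ε hε
    have hε0 : 0 < ε := hε.1
    have hsub : Icc (x0 - ε) x0 ⊆ Icc d x0 := Icc_subset_Icc (by linarith [hε.2]) (le_refl _)
    have hint : IntegrableOn p (Ico (x0 - ε) x0) volume :=
      ((hp.mono hsub).integrableOn_isCompact isCompact_Icc).mono_set Ico_subset_Icc_self
    have hmono : ∫ x in Ico (x0 - ε) x0, p x ≤ ∫ x in Ico (x0 - ε) x0, (P : ℝ) := by
      refine setIntegral_mono_on hint (integrableOn_const measure_Ico_lt_top.ne)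
        measurableSet_Ico ?_
      intro x hx
      exact hPge x ⟨by linarith [hx.1, hε.2], hx.2⟩
    rw [setIntegral_const, Real.volume_real_Ico_of_le (by linarith)] at hmono
    rw [div_le_iff₀ hε0]
    simpa [mul_comm, sub_sub_cancel] using hmono


theorem stmt16 (h : ℝ → ℝ) (hmeas : Measurable h)
    (hBV : BoundedVariationOn h (Set.Icc 0 1))
    (c : ℝ) (hc : 0 < c) (hlow : ∀ᵐ x ∂mLeb, c ≤ h x)
    (hint : ∫ x, h x ∂mLeb = 1)
    (ν : Measure ℝ) (hν : ν = mLeb.withDensity (fun x => ENNReal.ofReal (h x)))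
    (x0 : ℝ) (hx0 : x0 ∈ Set.Icc (0 : ℝ) 1) (α : ℝ) (hα : 0 < α) :
    ∃ b : ℝ, 0 < b ∧
      -- the limit `b = lim_{ε→0⁺} ε⁻¹ ν(B_ε(x0))` exists and is positive and finite
      Tendsto (fun ε : ℝ => (ν {x | |x - x0| < ε}).toReal / ε) (𝓝[>] (0 : ℝ)) (𝓝 b) ∧
      -- `t^α ν(φ > t) → b`, i.e. `φ` is regularly varying of index `α` w.r.t. `ν`
      Tendsto (fun t : ℝ => t ^ α * (ν {x | phiObs α x0 x > t}).toReal) atTop (𝓝 b) ∧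
      -- consequently `n ν(φ > b_n) → 1` for `b_n = (bn)^{1/α}`
      Tendsto (fun n : ℕ =>
        (n : ℝ) * (ν {x | phiObs α x0 x > (b * (n : ℝ)) ^ α⁻¹}).toReal) atTop (𝓝 1) := by
  obtain ⟨p, q, hpmono, hqmono, hpq⟩ :=
    hBV.locallyBoundedVariationOn.exists_monotoneOn_sub_monotoneOn
  have hlow' : ∀ᵐ x ∂(volume.restrict (Icc (0:ℝ) 1)), c ≤ h x := hlow
  -- integrability of h on [0,1]
  have hHint : IntegrableOn h (Icc (0:ℝ) 1) volume := by
    rw [hpq]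
    exact (hpmono.integrableOn_isCompact isCompact_Icc).sub
      (hqmono.integrableOn_isCompact isCompact_Icc)
  -- the measure of a measurable set, as an integral
  have key : ∀ s : Set ℝ, MeasurableSet s →
      (ν s).toReal = ∫ x in s ∩ Icc (0:ℝ) 1, h x := by
    intro s hs
    have hnn : 0 ≤ᵐ[volume.restrict (s ∩ Icc (0:ℝ) 1)] h := by
      filter_upwards [ae_restrict_of_ae_restrict_of_subset inter_subset_right hlow'] with x hx
      exact le_trans hc.le hx
    rw [hν, withDensity_apply _ hs]
    rw [show (mLeb).restrict s = volume.restrict (s ∩ Icc (0:ℝ) 1) by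
      rw [mLeb, Measure.restrict_restrict hs]]
    rw [integral_eq_lintegral_of_nonneg_ae hnn hmeas.aestronglyMeasurable]
  -- the left and right pieces
  set Rfun : ℝ → ℝ := fun ε => ∫ x in Ioc x0 (x0 + ε) ∩ Icc (0:ℝ) 1, h x with hRfun
  set Lfun : ℝ → ℝ := fun ε => ∫ x in Ico (x0 - ε) x0 ∩ Icc (0:ℝ) 1, h x with hLfun
  have hsplit : ∀ ε : ℝ, 0 < ε →
      (ν {x | |x - x0| < ε}).toReal = Lfun ε + Rfun ε := by
    intro ε hε
    have hball : {x : ℝ | |x - x0| < ε} = Ioo (x0 - ε) (x0 + ε) := by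
      ext x
      simp only [mem_setOf_eq, mem_Ioo, abs_lt]
      constructor <;> rintro ⟨h1, h2⟩ <;> constructor <;> linarith
    rw [hball, key _ measurableSet_Ioo]
    have hae1 : (Ioo (x0 - ε) (x0 + ε) : Set ℝ) =ᵐ[volume]
        ((Ico (x0 - ε) x0 ∪ Ioc x0 (x0 + ε) : Set ℝ)) := by
      have h1 : (Ioo (x0 - ε) (x0 + ε) : Set ℝ) =ᵐ[volume] Ico (x0 - ε) (x0 + ε) :=
        Ioo_ae_eq_Ico
      have h2 : (Ico (x0 - ε) (x0 + ε) : Set ℝ) = Ico (x0 - ε) x0 ∪ Ico x0 (x0 + ε) :=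
        (Ico_union_Ico_eq_Ico (by linarith) (by linarith)).symm
      have h3 : (Ico x0 (x0 + ε) : Set ℝ) =ᵐ[volume] Ioc x0 (x0 + ε) := Ico_ae_eq_Ioc
      have h4 : (Ico (x0 - ε) x0 ∪ Ico x0 (x0 + ε) : Set ℝ) =ᵐ[volume]
          ((Ico (x0 - ε) x0 ∪ Ioc x0 (x0 + ε) : Set ℝ)) := ae_eq_set_union EventuallyEq.rfl h3
      exact h1.trans (by rw [h2]; exact h4)
    have hae2 : (Ioo (x0 - ε) (x0 + ε) ∩ Icc (0:ℝ) 1 : Set ℝ) =ᵐ[volume]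
        ((Ico (x0 - ε) x0 ∪ Ioc x0 (x0 + ε)) ∩ Icc (0:ℝ) 1 : Set ℝ) :=
      ae_eq_set_inter hae1 EventuallyEq.rfl
    rw [setIntegral_congr_set hae2, union_inter_distrib_right]
    rw [setIntegral_union ?_ (measurableSet_Ioc.inter measurableSet_Icc)
      (hHint.mono_set inter_subset_right) (hHint.mono_set inter_subset_right)]
    rw [disjoint_left]
    rintro x ⟨hx1, -⟩ ⟨hx2, -⟩
    exact absurd hx2.1 (not_lt.2 hx1.2.le)
  -- right piece limit
  have hR : ∃ br : ℝ, 0 ≤ br ∧ (x0 < 1 → c ≤ br) ∧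
      Tendsto (fun ε => Rfun ε / ε) (𝓝[>] 0) (𝓝 br) := by
    rcases lt_or_ge x0 1 with hx01 | hx01
    · have hev : Ioo (0 : ℝ) (1 - x0) ∈ 𝓝[>] (0 : ℝ) :=
        Ioo_mem_nhdsGT_of_mem ⟨le_refl _, by linarith⟩
      have hsubIcc : ∀ ε ∈ Ioo (0:ℝ) (1 - x0), Ioc x0 (x0 + ε) ⊆ Icc (0:ℝ) 1 := by
        intro ε hε x hx
        exact ⟨le_trans hx0.1 hx.1.le, by linarith [hx.2, hε.2]⟩
      have heq : (fun ε => Rfun ε / ε) =ᶠ[𝓝[>] (0:ℝ)]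
          (fun ε => (∫ x in Ioc x0 (x0 + ε), h x) / ε) := by
        filter_upwards [hev] with ε hε
        rw [hRfun]
        simp only
        rw [inter_eq_left.2 (hsubIcc ε hε)]
      have hpav := mono_avg_right p x0 1 hx01 (hpmono.mono (Icc_subset_Icc hx0.1 (le_refl _)))
      have hqav := mono_avg_right q x0 1 hx01 (hqmono.mono (Icc_subset_Icc hx0.1 (le_refl _)))
      have hsum := hpav.sub hqav
      have heq2 : (fun ε => (∫ x in Ioc x0 (x0 + ε), p x) / ε
            - (∫ x in Ioc x0 (x0 + ε), q x) / ε) =ᶠ[𝓝[>] (0:ℝ)]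
          (fun ε => (∫ x in Ioc x0 (x0 + ε), h x) / ε) := by
        filter_upwards [hev] with ε hε
        have hsub : Icc x0 (x0 + ε) ⊆ Icc (0:ℝ) 1 :=
          Icc_subset_Icc hx0.1 (by linarith [hε.2])
        have hip : IntegrableOn p (Ioc x0 (x0 + ε)) volume :=
          (((hpmono.mono hsub)).integrableOn_isCompact isCompact_Icc).mono_set
            Ioc_subset_Icc_self
        have hiq : IntegrableOn q (Ioc x0 (x0 + ε)) volume :=
          (((hqmono.mono hsub)).integrableOn_isCompact isCompact_Icc).mono_set
            Ioc_subset_Icc_self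
        rw [hpq, div_sub_div_same, ← integral_sub hip hiq]
        rfl
      have htend : Tendsto (fun ε => Rfun ε / ε) (𝓝[>] 0)
          (𝓝 (sInf (p '' Ioo x0 1) - sInf (q '' Ioo x0 1))) :=
        (hsum.congr' heq2).congr' heq.symm
      refine ⟨_, le_trans hc.le ?_, fun _ => ?_, htend⟩ <;>
      · refine ge_of_tendsto htend ?_
        filter_upwards [hev] with ε hε
        have hsub := hsubIcc ε hε
        have hia : IntegrableOn h (Ioc x0 (x0 + ε)) volume := hHint.mono_set hsub
        have hnn : ∀ᵐ x ∂(volume.restrict (Ioc x0 (x0 + ε))), c ≤ h x :=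
          ae_restrict_of_ae_restrict_of_subset hsub hlow'
        have hmono : ∫ x in Ioc x0 (x0 + ε), (c : ℝ) ≤ ∫ x in Ioc x0 (x0 + ε), h x :=
          integral_mono_ae (integrableOn_const measure_Ioc_lt_top.ne) hia hnn
        rw [setIntegral_const, Real.volume_real_Ioc_of_le (by linarith [hε.1])]
          at hmono
        rw [hRfun]
        simp only
        rw [inter_eq_left.2 hsub, le_div_iff₀ hε.1]
        simpa [mul_comm] using hmono
    · have hx0eq : x0 = 1 := le_antisymm hx0.2 hx01
      have hempty : ∀ ε : ℝ, Ioc x0 (x0 + ε) ∩ Icc (0:ℝ) 1 = ∅ := by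
        intro ε
        rw [eq_empty_iff_forall_notMem]
        rintro x ⟨hx1, hx2⟩
        rw [hx0eq] at hx1
        linarith [hx1.1, hx2.2]
      refine ⟨0, le_refl _, fun hlt => absurd hlt (not_lt.2 hx01), ?_⟩
      have : (fun ε => Rfun ε / ε) = fun _ => (0:ℝ) := by
        funext ε
        rw [hRfun]
        simp [hempty ε]
      rw [this]
      exact tendsto_const_nhds
  -- left piece limit
  have hL : ∃ bl : ℝ, 0 ≤ bl ∧ (0 < x0 → c ≤ bl) ∧
      Tendsto (fun ε => Lfun ε / ε) (𝓝[>] 0) (𝓝 bl) := by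
    rcases lt_or_ge 0 x0 with hx01 | hx01
    · have hev : Ioo (0 : ℝ) x0 ∈ 𝓝[>] (0 : ℝ) :=
        Ioo_mem_nhdsGT_of_mem ⟨le_refl _, hx01⟩
      have hsubIcc : ∀ ε ∈ Ioo (0:ℝ) x0, Ico (x0 - ε) x0 ⊆ Icc (0:ℝ) 1 := by
        intro ε hε x hx
        exact ⟨by linarith [hx.1, hε.2], le_trans hx.2.le hx0.2⟩
      have heq : (fun ε => Lfun ε / ε) =ᶠ[𝓝[>] (0:ℝ)]
          (fun ε => (∫ x in Ico (x0 - ε) x0, h x) / ε) := by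
        filter_upwards [hev] with ε hε
        rw [hLfun]
        simp only
        rw [inter_eq_left.2 (hsubIcc ε hε)]
      have hpav := mono_avg_left p x0 0 hx01 (hpmono.mono (Icc_subset_Icc (le_refl _) hx0.2))
      have hqav := mono_avg_left q x0 0 hx01 (hqmono.mono (Icc_subset_Icc (le_refl _) hx0.2))
      have hsum := hpav.sub hqav
      have heq2 : (fun ε => (∫ x in Ico (x0 - ε) x0, p x) / ε
            - (∫ x in Ico (x0 - ε) x0, q x) / ε) =ᶠ[𝓝[>] (0:ℝ)]
          (fun ε => (∫ x in Ico (x0 - ε) x0, h x) / ε) := by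
        filter_upwards [hev] with ε hε
        have hsub : Icc (x0 - ε) x0 ⊆ Icc (0:ℝ) 1 :=
          Icc_subset_Icc (by linarith [hε.2]) hx0.2
        have hip : IntegrableOn p (Ico (x0 - ε) x0) volume :=
          (((hpmono.mono hsub)).integrableOn_isCompact isCompact_Icc).mono_set
            Ico_subset_Icc_self
        have hiq : IntegrableOn q (Ico (x0 - ε) x0) volume :=
          (((hqmono.mono hsub)).integrableOn_isCompact isCompact_Icc).mono_set
            Ico_subset_Icc_self
        rw [hpq, div_sub_div_same, ← integral_sub hip hiq]
        rfl
      have htend : Tendsto (fun ε => Lfun ε / ε) (𝓝[>] 0)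
          (𝓝 (sSup (p '' Ioo 0 x0) - sSup (q '' Ioo 0 x0))) :=
        (hsum.congr' heq2).congr' heq.symm
      refine ⟨_, le_trans hc.le ?_, fun _ => ?_, htend⟩ <;>
      · refine ge_of_tendsto htend ?_
        filter_upwards [hev] with ε hε
        have hsub := hsubIcc ε hε
        have hia : IntegrableOn h (Ico (x0 - ε) x0) volume := hHint.mono_set hsub
        have hnn : ∀ᵐ x ∂(volume.restrict (Ico (x0 - ε) x0)), c ≤ h x :=
          ae_restrict_of_ae_restrict_of_subset hsub hlow'
        have hmono : ∫ x in Ico (x0 - ε) x0, (c : ℝ) ≤ ∫ x in Ico (x0 - ε) x0, h x :=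
          integral_mono_ae (integrableOn_const measure_Ico_lt_top.ne) hia hnn
        rw [setIntegral_const, Real.volume_real_Ico_of_le (by linarith [hε.1])]
          at hmono
        rw [hLfun]
        simp only
        rw [inter_eq_left.2 hsub, le_div_iff₀ hε.1]
        simpa [mul_comm, sub_sub_cancel] using hmono
    · have hx0eq : x0 = 0 := le_antisymm hx01 hx0.1
      have hempty : ∀ ε : ℝ, Ico (x0 - ε) x0 ∩ Icc (0:ℝ) 1 = ∅ := by
        intro ε
        rw [eq_empty_iff_forall_notMem]
        rintro x ⟨hx1, hx2⟩
        rw [hx0eq] at hx1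
        linarith [hx1.2, hx2.1]
      refine ⟨0, le_refl _, fun hlt => absurd hlt (not_lt.2 hx01), ?_⟩
      have : (fun ε => Lfun ε / ε) = fun _ => (0:ℝ) := by
        funext ε
        rw [hLfun]
        simp [hempty ε]
      rw [this]
      exact tendsto_const_nhds
  obtain ⟨br, hbr0, hbrc, hbrt⟩ := hR
  obtain ⟨bl, hbl0, hblc, hblt⟩ := hL
  set b := bl + br with hb
  have hbpos : 0 < b := by
    rcases lt_or_ge x0 1 with hx01 | hx01
    · have := hbrc hx01; rw [hb]; linarith
    · have hx0eq : x0 = 1 := le_antisymm hx0.2 hx01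
      have := hblc (by rw [hx0eq]; norm_num)
      rw [hb]; linarith
  -- part 1
  have part1 : Tendsto (fun ε : ℝ => (ν {x | |x - x0| < ε}).toReal / ε) (𝓝[>] (0:ℝ)) (𝓝 b) := by
    refine (hblt.add hbrt).congr' ?_
    filter_upwards [self_mem_nhdsWithin] with ε (hε : 0 < ε)
    rw [hsplit ε hε, add_div]
  -- part 2
  have hν0 : ν {x0} = 0 := by
    have h0 : mLeb {x0} = 0 := by
      rw [mLeb, Measure.restrict_apply (measurableSet_singleton x0)]
      exact measure_mono_null inter_subset_left (Real.volume_singleton)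
    rw [hν]
    exact (withDensity_absolutelyContinuous mLeb _) h0
  have hsetEq : ∀ t : ℝ, 0 < t →
      {x : ℝ | phiObs α x0 x > t} = {x : ℝ | |x - x0| < t ^ (-α)} \ {x0} := by
    intro t ht
    ext x
    simp only [phiObs, mem_setOf_eq, mem_diff, mem_singleton_iff, gt_iff_lt]
    rcases eq_or_ne x x0 with rfl | hne
    · simp only [sub_self, abs_zero]
      rw [Real.zero_rpow (by simp [hα.ne'] : -α⁻¹ ≠ 0)]
      simp [ht.not_gt]
    · have hr : 0 < |x - x0| := abs_pos.2 (sub_ne_zero.2 hne)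
      have hiff : |x - x0| < t ^ (-α) ↔ t < |x - x0| ^ (-α⁻¹) := by
        have := Real.rpow_lt_rpow_iff_of_neg (Real.rpow_pos_of_pos hr (-α⁻¹)) ht
          (neg_lt_zero.2 hα)
        rw [← Real.rpow_mul hr.le, neg_mul_neg, inv_mul_cancel₀ hα.ne', Real.rpow_one] at this
        exact this
      constructor
      · intro hgt
        exact ⟨hiff.2 hgt, hne⟩
      · rintro ⟨hlt, -⟩
        exact hiff.1 hlt
  have hmapto : Tendsto (fun t : ℝ => t ^ (-α)) atTop (𝓝[>] (0:ℝ)) := by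
    refine tendsto_nhdsWithin_of_tendsto_nhds_of_eventually_within _
      (tendsto_rpow_neg_atTop hα) ?_
    filter_upwards [eventually_gt_atTop (0:ℝ)] with t ht
    exact Real.rpow_pos_of_pos ht _
  have part2 : Tendsto (fun t : ℝ => t ^ α * (ν {x | phiObs α x0 x > t}).toReal)
      atTop (𝓝 b) := by
    refine (part1.comp hmapto).congr' ?_
    filter_upwards [eventually_gt_atTop (0:ℝ)] with t ht
    have hmeq : ν {x : ℝ | phiObs α x0 x > t} = ν {x : ℝ | |x - x0| < t ^ (-α)} := by
      rw [hsetEq t ht, measure_diff_null hν0]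
    simp only [Function.comp_apply, hmeq]
    rw [Real.rpow_neg ht.le, div_eq_mul_inv, inv_inv, mul_comm]
  -- part 3
  have htn : Tendsto (fun n : ℕ => (b * (n:ℝ)) ^ α⁻¹) atTop atTop := by
    refine (tendsto_rpow_atTop (inv_pos.2 hα)).comp ?_
    exact Tendsto.const_mul_atTop hbpos tendsto_natCast_atTop_atTop
  have part3pre := part2.comp htn
  have part3 : Tendsto (fun n : ℕ =>
      (n : ℝ) * (ν {x | phiObs α x0 x > (b * (n:ℝ)) ^ α⁻¹}).toReal) atTop (𝓝 1) := by
    have := part3pre.const_mul (1 / b)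
    rw [one_div, inv_mul_cancel₀ hbpos.ne'] at this
    refine this.congr' ?_
    filter_upwards [eventually_ge_atTop 1] with n hn
    have hn0 : (0:ℝ) ≤ b * n := by positivity
    simp only [Function.comp_apply]
    rw [Real.rpow_inv_rpow hn0 hα.ne']
    field_simp
  exact ⟨b, hbpos, part1, part2, part3⟩

end
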